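/- arXiv:2009.13821 — 2 statements merged into one kernel-verified Lean document; each statement's English description precedes it below -/
import Mathlib

section
/- In the flow network N_k constructed from a database D over R(A,B) with Δ = {A→B, B→A}, every minimum-cost integral maximum flow f satisfies cost(f) = w_D(D[f]), where D[f] ⊆ D is the set of facts R(a,b) whose edge (v_a, u_b) carries flow 1. -/
attribute [local instance] Classical.propDecidable

open Finset

/-- Number of unordered pairs of distinct facts of `E` violating `viol`. -/
noncomputable def numVio {F : Type*} [DecidableEq F] (viol : F → F → Prop)
    (E : Finset F) : ℕ :=
  ((E.powersetCard 2).filter (fun p => ∀ f ∈ p, ∀ g ∈ p, f ≠ g → viol f g)).card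

/-- Nodes of the flow network `N_k`: source `s`, auxiliary node `sp = s'`,
sink `t`, left copies `vAi a i` and left block nodes `vA a`, right block nodes
`uB b` and right copies `uBi b i` (the index `i : Fin n` stands for `i+1`). -/
inductive FNode (α β : Type*) (n : ℕ) where
  | s | sp | t
  | vAi (a : α) (i : Fin n)
  | vA (a : α)
  | uB (b : β)
  | uBi (b : β) (i : Fin n)
  deriving DecidableEq, Fintype

variable {α β : Type*} [DecidableEq α] [DecidableEq β]

/-- `#_{D.A}(a)`, the number of facts of `D` with `A`-value `a`. -/
def cntA (D : Finset (α × β)) (a : α) : ℕ := (D.filter (fun f => f.1 = a)).card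

/-- `#_{D.B}(b)`. -/
def cntB (D : Finset (α × β)) (b : β) : ℕ := (D.filter (fun f => f.2 = b)).card

/-- Edge capacities of `N_k`: `(s,s')` has capacity `k`, all other edges capacity 1. -/
def capN (D : Finset (α × β)) (k : ℕ) :
    FNode α β D.card → FNode α β D.card → ℕ
  | .s, .sp => k
  | .sp, .vAi a i => if i.val < cntA D a then 1 else 0
  | .vAi a i, .vA a' => if a = a' ∧ i.val < cntA D a then 1 else 0
  | .vA a, .uB b => if (a, b) ∈ D then 1 else 0
  | .uB b, .uBi b' i => if b = b' ∧ i.val < cntB D b then 1 else 0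
  | .uBi b i, .t => if i.val < cntB D b then 1 else 0
  | _, _ => 0

/-- Edge costs of `N_k`: `(v_a^{i+1}, v_a)` costs `i·w₁`, `(v_a,u_b)` costs `−w f`
for the fact `f = (a,b)`, `(u_b, u_b^{i+1})` costs `i·w₂`; all other edges cost 0. -/
noncomputable def ecostN (D : Finset (α × β)) (w : α × β → ℚ) (w1 w2 : ℚ) :
    FNode α β D.card → FNode α β D.card → ℚ
  | .vAi a i, .vA a' => if a = a' then (i.val : ℚ) * w1 else 0
  | .vA a, .uB b => if (a, b) ∈ D then -w (a, b) else 0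
  | .uB b, .uBi b' i => if b = b' then (i.val : ℚ) * w2 else 0
  | _, _ => 0

/-- An integral flow on `N_k`: capacities respected and flow conserved at every
node other than the source and the sink. -/
def IsFlow [Fintype α] [Fintype β] (D : Finset (α × β)) (k : ℕ)
    (g : FNode α β D.card → FNode α β D.card → ℕ) : Prop :=
  (∀ u v, g u v ≤ capN D k u v) ∧
  (∀ v : FNode α β D.card, v ≠ FNode.s → v ≠ FNode.t →
    (∑ u, g u v) = ∑ u, g v u)

/-- The value of a flow. -/
def flowValue [Fintype α] [Fintype β] {n : ℕ}
    (g : FNode α β n → FNode α β n → ℕ) : ℕ :=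
  ∑ v, g FNode.s v

/-- The cost of a flow: `Σ_e g(e)·c(e)`. -/
noncomputable def flowCost [Fintype α] [Fintype β] (D : Finset (α × β))
    (w : α × β → ℚ) (w1 w2 : ℚ)
    (g : FNode α β D.card → FNode α β D.card → ℕ) : ℚ :=
  ∑ u, ∑ v, (g u v : ℚ) * ecostN D w w1 w2 u v

/-- `w_D(E)` for `Δ = {A→B, B→A}` with weights `w₁, w₂`. -/
noncomputable def wDAB (w : α × β → ℚ) (w1 w2 : ℚ) (E : Finset (α × β)) : ℚ :=
  (∑ f ∈ E, -(w f)) +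
    w1 * (numVio (fun f g => f.1 = g.1 ∧ f.2 ≠ g.2) E : ℚ) +
    w2 * (numVio (fun f g => f.2 = g.2 ∧ f.1 ≠ g.1) E : ℚ)

/-- The flow `f_E` induced by a subset `E ⊆ D`. -/
def fE (D E : Finset (α × β)) :
    FNode α β D.card → FNode α β D.card → ℕ
  | .s, .sp => E.card
  | .sp, .vAi a i => if i.val < cntA E a then 1 else 0
  | .vAi a i, .vA a' => if a = a' ∧ i.val < cntA E a then 1 else 0
  | .vA a, .uB b => if (a, b) ∈ E then 1 else 0
  | .uB b, .uBi b' i => if b = b' ∧ i.val < cntB E b then 1 else 0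
  | .uBi b i, .t => if i.val < cntB E b then 1 else 0
  | _, _ => 0

/-- The subset `D[g] ⊆ D` induced by a flow `g`: the facts `(a,b)` whose edge
`(v_a, u_b)` carries one unit of flow. -/
def Dof (D : Finset (α × β)) {n : ℕ} (g : FNode α β n → FNode α β n → ℕ) :
    Finset (α × β) :=
  D.filter (fun f => g (FNode.vA f.1) (FNode.uB f.2) = 1)

/-! ### Auxiliary lemmas -/

section AuxCount

/-- Sum of the `card` smallest naturals is at most the sum of any finset of naturals. -/
lemma sum_range_card_le_sum_finset : ∀ (T : Finset ℕ), ∑ i ∈ range T.card, i ≤ ∑ i ∈ T, i := by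
  intro T
  generalize h : T.card = nn
  induction nn generalizing T with
  | zero => simp
  | succ n ih =>
    have hne : T.Nonempty := card_pos.mp (h ▸ n.succ_pos)
    set m := T.max' hne with hm
    have hmem : m ∈ T := T.max'_mem hne
    have hc : (T.erase m).card = n := by simp [card_erase_of_mem hmem, h]
    have hsub : T ⊆ range (m+1) := fun x hx => mem_range.mpr (Nat.lt_succ_of_le (le_max' T x hx))
    have hmn : n ≤ m := by
      have := card_le_card hsub
      simpa [h, card_range] using this
    calc ∑ i ∈ range (n+1), i = (∑ i ∈ range n, i) + n := by rw [Finset.sum_range_succ]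
      _ ≤ (∑ i ∈ T.erase m, i) + m := add_le_add (hc ▸ ih _ hc) hmn
      _ = ∑ i ∈ T, i := by rw [add_comm]; exact Finset.add_sum_erase T (fun i => i) hmem

/-- A 0/1 vector with sum `m` has weighted index-sum at least `0 + 1 + ⋯ + (m-1)`. -/
lemma lower_bound_sum {n : ℕ} (x : Fin n → ℕ) (hx : ∀ i, x i ≤ 1) :
    ∑ i ∈ range (∑ i, x i), i ≤ ∑ i : Fin n, x i * i.val := by
  classical
  set S := univ.filter (fun i : Fin n => x i = 1) with hS
  have hsum : ∑ i, x i = S.card := by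
    rw [card_filter]
    refine Finset.sum_congr rfl fun i _ => ?_
    have := hx i; interval_cases h : x i <;> simp [h]
  have hxi : ∀ i : Fin n, x i * i.val = if i ∈ S then i.val else 0 := by
    intro i
    have := hx i
    by_cases h : i ∈ S
    · simp [hS, mem_filter] at h; simp [h, hS, mem_filter]
    · simp [hS, mem_filter] at h
      have : x i = 0 := by omega
      simp [this, hS, mem_filter, h]
  calc ∑ i ∈ range (∑ i, x i), i = ∑ i ∈ range (S.image Fin.val).card, i := by
        rw [hsum, card_image_of_injective _ Fin.val_injective]
    _ ≤ ∑ i ∈ S.image Fin.val, i := sum_range_card_le_sum_finset _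
    _ = ∑ i ∈ S, i.val := sum_image (fun a _ b _ h => Fin.val_injective h)
    _ = ∑ i : Fin n, x i * i.val := by
        simp only [hxi]
        rw [← Finset.sum_filter]
        congr 1
        simp [hS, filter_filter]

lemma sum_range_id_choose (m : ℕ) : ∑ i ∈ range m, i = m.choose 2 := by
  induction m with
  | zero => simp
  | succ n ih =>
    have hg := Finset.sum_range_id_mul_two n
    have key : (∑ i ∈ range n, i + n) * 2 = (n+1) * n := by
      rw [add_mul, hg]
      cases n with
      | zero => simp
      | succ m => simp only [Nat.succ_sub_one]; ring
    have h2 : (n+1).choose 2 = (n+1) * n / 2 := by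
      rw [Nat.choose_two_right, Nat.succ_sub_one]
    rw [Finset.sum_range_succ, ← ih] at *
    omega

/-- Generic counting: pairs violating "same key and distinct". -/
lemma numVio_key {F γ : Type*} [DecidableEq F] [DecidableEq γ] [Fintype γ]
    (E : Finset F) (key : F → γ) :
    numVio (fun f g => key f = key g ∧ f ≠ g) E
      = ∑ c, ((E.filter (fun f => key f = c)).card).choose 2 := by
  unfold numVio
  have hset : (E.powersetCard 2).filter
        (fun p => ∀ f ∈ p, ∀ g ∈ p, f ≠ g → key f = key g ∧ f ≠ g)
      = univ.biUnion (fun c => (E.filter (fun f => key f = c)).powersetCard 2) := by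
    ext p
    simp only [mem_filter, mem_powersetCard, mem_biUnion, mem_univ, true_and]
    constructor
    · rintro ⟨⟨hpE, hc⟩, hP⟩
      obtain ⟨f, g, hfg, rfl⟩ := card_eq_two.mp hc
      have hk := (hP f (by simp) g (by simp) hfg).1
      refine ⟨key f, ⟨?_, hc⟩⟩
      intro x hx
      rcases mem_insert.mp hx with rfl | hx
      · exact mem_filter.mpr ⟨hpE (by simp), rfl⟩
      · rw [mem_singleton] at hx; subst hx
        exact mem_filter.mpr ⟨hpE (by simp), hk.symm⟩
    · rintro ⟨c, hpc, hc⟩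
      refine ⟨⟨hpc.trans (filter_subset _ _), hc⟩, ?_⟩
      intro f hf g hg hfg
      have h1 := (mem_filter.mp (hpc hf)).2
      have h2 := (mem_filter.mp (hpc hg)).2
      exact ⟨h1.trans h2.symm, hfg⟩
  rw [hset, card_biUnion]
  · refine Finset.sum_congr rfl fun c _ => ?_
    rw [card_powersetCard]
  · intro c _ c' _ hcc
    refine disjoint_left.mpr fun p hp hp' => ?_
    rw [mem_powersetCard] at hp hp'
    have hne : p.Nonempty := card_pos.mp (by rw [hp.2]; norm_num)
    obtain ⟨x, hx⟩ := hne
    have h1 := (mem_filter.mp (hp.1 hx)).2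
    have h2 := (mem_filter.mp (hp'.1 hx)).2
    exact hcc (h1 ▸ h2 ▸ rfl)

lemma numVio_fst {α β : Type*} [DecidableEq α] [DecidableEq β] [Fintype α]
    (E : Finset (α × β)) :
    numVio (fun f g => f.1 = g.1 ∧ f.2 ≠ g.2) E = ∑ a, (cntA E a).choose 2 := by
  rw [show (∑ a, (cntA E a).choose 2)
      = ∑ a, ((E.filter (fun f => f.1 = a)).card).choose 2 from rfl,
    ← numVio_key E Prod.fst]
  unfold numVio
  congr 1
  ext p
  simp only [mem_filter]
  rw [and_congr_right_iff]
  intro hp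
  constructor
  · intro h f hf g hg hfg
    exact ⟨(h f hf g hg hfg).1, hfg⟩
  · intro h f hf g hg hfg
    refine ⟨(h f hf g hg hfg).1, fun hsnd => hfg ?_⟩
    exact Prod.ext (h f hf g hg hfg).1 hsnd

lemma numVio_snd {α β : Type*} [DecidableEq α] [DecidableEq β] [Fintype β]
    (E : Finset (α × β)) :
    numVio (fun f g => f.2 = g.2 ∧ f.1 ≠ g.1) E = ∑ b, (cntB E b).choose 2 := by
  rw [show (∑ b, (cntB E b).choose 2)
      = ∑ b, ((E.filter (fun f => f.2 = b)).card).choose 2 from rfl,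
    ← numVio_key E Prod.snd]
  unfold numVio
  congr 1
  ext p
  simp only [mem_filter]
  rw [and_congr_right_iff]
  intro hp
  constructor
  · intro h f hf g hg hfg
    exact ⟨(h f hf g hg hfg).1, hfg⟩
  · intro h f hf g hg hfg
    refine ⟨(h f hf g hg hfg).1, fun hsnd => hfg ?_⟩
    exact Prod.ext hsnd (h f hf g hg hfg).1

end AuxCount

section AuxSum

/-- Explicit equiv decomposing `FNode`. -/
def fnEquiv (α β : Type*) (n : ℕ) :
    FNode α β n ≃ (Unit ⊕ Unit ⊕ Unit ⊕ (α × Fin n) ⊕ α ⊕ β ⊕ (β × Fin n)) where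
  toFun v := match v with
    | .s => .inl ()
    | .sp => .inr (.inl ())
    | .t => .inr (.inr (.inl ()))
    | .vAi a i => .inr (.inr (.inr (.inl (a, i))))
    | .vA a => .inr (.inr (.inr (.inr (.inl a))))
    | .uB b => .inr (.inr (.inr (.inr (.inr (.inl b)))))
    | .uBi b i => .inr (.inr (.inr (.inr (.inr (.inr (b, i))))))
  invFun x := match x with
    | .inl () => .s
    | .inr (.inl ()) => .sp
    | .inr (.inr (.inl ())) => .t
    | .inr (.inr (.inr (.inl (a, i)))) => .vAi a i
    | .inr (.inr (.inr (.inr (.inl a)))) => .vA a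
    | .inr (.inr (.inr (.inr (.inr (.inl b))))) => .uB b
    | .inr (.inr (.inr (.inr (.inr (.inr (b, i)))))) => .uBi b i
  left_inv v := by cases v <;> rfl
  right_inv x := by rcases x with _|_|_|⟨a,i⟩|_|_|⟨b,i⟩ <;> rfl

lemma sum_fnode {α β : Type*} [Fintype α] [Fintype β] {n : ℕ} {M : Type*} [AddCommMonoid M]
    (f : FNode α β n → M) :
    ∑ v, f v = f .s + f .sp + f .t + (∑ a, ∑ i, f (.vAi a i)) + (∑ a, f (.vA a))
      + (∑ b, f (.uB b)) + (∑ b, ∑ i, f (.uBi b i)) := by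
  rw [← Equiv.sum_comp (fnEquiv α β n).symm f]
  simp [Fintype.sum_sum_type, Fintype.sum_prod_type, fnEquiv, add_assoc]

lemma sum_fin_ite01 {n m : ℕ} (hm : m ≤ n) :
    (∑ i : Fin n, if i.val < m then 1 else 0) = m := by
  rw [Fin.sum_univ_eq_sum_range (fun i => if i < m then 1 else 0)]
  rw [Finset.sum_ite, Finset.sum_const_zero, add_zero, Finset.sum_const, smul_eq_mul, mul_one]
  have : (range n).filter (· < m) = range m := by
    ext x; simp [mem_range, mem_filter]; omega
  rw [this, card_range]

lemma sum_fin_ite_cast {n m : ℕ} (hm : m ≤ n) (c : ℚ) :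
    (∑ i : Fin n, (if i.val < m then (1:ℚ) else 0) * ((i.val : ℚ) * c))
      = (∑ i ∈ range m, (i : ℚ)) * c := by
  rw [Fin.sum_univ_eq_sum_range (fun i => (if i < m then (1:ℚ) else 0) * ((i : ℚ) * c))]
  have hfil : (range n).filter (· < m) = range m := by
    ext x; simp [mem_range, mem_filter]; omega
  calc ∑ i ∈ range n, (if i < m then (1:ℚ) else 0) * ((i : ℚ) * c)
      = ∑ i ∈ range n, (if i < m then (i:ℚ) * c else 0) := by
        refine Finset.sum_congr rfl fun i _ => ?_; split_ifs <;> simp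
    _ = ∑ i ∈ (range n).filter (· < m), (i : ℚ) * c := by rw [← Finset.sum_filter]
    _ = ∑ i ∈ range m, (i : ℚ) * c := by rw [hfil]
    _ = (∑ i ∈ range m, (i : ℚ)) * c := by rw [Finset.sum_mul]

variable {α β : Type*} [DecidableEq α] [DecidableEq β]

lemma cntA_sum [Fintype β] (E : Finset (α × β)) (a : α) :
    (∑ b, if (a, b) ∈ E then 1 else 0) = cntA E a := by
  classical
  rw [Finset.sum_ite, Finset.sum_const_zero, add_zero, Finset.sum_const, smul_eq_mul, mul_one]
  unfold cntA
  refine Finset.card_bij (fun b _ => (a, b)) ?_ ?_ ?_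
  · intro b hb
    rw [mem_filter] at hb
    exact mem_filter.mpr ⟨hb.2, rfl⟩
  · intro b _ b' _ h
    exact (Prod.mk.injEq _ _ _ _).mp h |>.2
  · intro p hp
    rw [mem_filter] at hp
    refine ⟨p.2, mem_filter.mpr ⟨mem_univ _, ?_⟩, Prod.ext hp.2.symm rfl⟩
    rw [show (a, p.2) = p from Prod.ext hp.2.symm rfl]; exact hp.1

lemma cntB_sum [Fintype α] (E : Finset (α × β)) (b : β) :
    (∑ a, if (a, b) ∈ E then 1 else 0) = cntB E b := by
  classical
  rw [Finset.sum_ite, Finset.sum_const_zero, add_zero, Finset.sum_const, smul_eq_mul, mul_one]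
  unfold cntB
  refine Finset.card_bij (fun a _ => (a, b)) ?_ ?_ ?_
  · intro a ha
    rw [mem_filter] at ha
    exact mem_filter.mpr ⟨ha.2, rfl⟩
  · intro a _ a' _ h
    exact (Prod.mk.injEq _ _ _ _).mp h |>.1
  · intro p hp
    rw [mem_filter] at hp
    refine ⟨p.1, mem_filter.mpr ⟨mem_univ _, ?_⟩, Prod.ext rfl hp.2.symm⟩
    rw [show (p.1, b) = p from Prod.ext rfl hp.2.symm]; exact hp.1

lemma sum_cntA [Fintype α] (E : Finset (α × β)) : ∑ a, cntA E a = E.card := by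
  classical
  exact (Finset.card_eq_sum_card_fiberwise (f := Prod.fst) (t := univ)
    (fun x _ => mem_univ _)).symm

lemma sum_cntB [Fintype β] (E : Finset (α × β)) : ∑ b, cntB E b = E.card := by
  classical
  exact (Finset.card_eq_sum_card_fiberwise (f := Prod.snd) (t := univ)
    (fun x _ => mem_univ _)).symm

end AuxSum

section AuxFlow

variable {α β : Type*} [DecidableEq α] [DecidableEq β]

lemma flowCost_eq [Fintype α] [Fintype β] (D : Finset (α × β)) (w : α × β → ℚ)
    (w1 w2 : ℚ) (g : FNode α β D.card → FNode α β D.card → ℕ) :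
    flowCost D w w1 w2 g
      = (∑ a, ∑ i, (g (.vAi a i) (.vA a) : ℚ) * ((i.val : ℚ) * w1))
      + (∑ a, ∑ b, (g (.vA a) (.uB b) : ℚ) * (if (a, b) ∈ D then -w (a, b) else 0))
      + (∑ b, ∑ i, (g (.uB b) (.uBi b i) : ℚ) * ((i.val : ℚ) * w2)) := by
  unfold flowCost
  rw [sum_fnode (fun u => ∑ v, (g u v : ℚ) * ecostN D w w1 w2 u v)]
  simp only [sum_fnode, ecostN]
  simp [mul_ite, mul_zero, Finset.sum_ite_eq]

/-- `fE D E` is a flow when `E ⊆ D` and `|E| ≤ k`. -/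
lemma isFlow_fE [Fintype α] [Fintype β] (D E : Finset (α × β)) (k : ℕ)
    (hE : E ⊆ D) (hk : E.card ≤ k) : IsFlow D k (fE D E) := by
  have hA : ∀ a, cntA E a ≤ cntA D a := fun a => card_le_card (filter_subset_filter _ hE)
  have hB : ∀ b, cntB E b ≤ cntB D b := fun b => card_le_card (filter_subset_filter _ hE)
  have hAn : ∀ a, cntA E a ≤ D.card :=
    fun a => le_trans (card_filter_le _ _) (card_le_card hE)
  have hBn : ∀ b, cntB E b ≤ D.card :=
    fun b => le_trans (card_filter_le _ _) (card_le_card hE)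
  constructor
  · rintro (_|_|_|⟨a,i⟩|a|b|⟨b,i⟩) (_|_|_|⟨a',i'⟩|a'|b'|⟨b',i'⟩) <;>
      try exact Nat.zero_le _
    · exact hk
    · have := hA a'
      simp only [fE, capN]; split_ifs <;> omega
    · simp only [fE, capN]
      split_ifs with h1 h2
      · exact le_rfl
      · exact absurd ⟨h1.1, lt_of_lt_of_le h1.2 (hA a)⟩ h2
      · exact Nat.zero_le _
      · exact Nat.zero_le _
    · simp only [fE, capN]
      split_ifs with h1 h2
      · exact le_rfl
      · exact absurd (hE h1) h2
      · exact Nat.zero_le _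
      · exact Nat.zero_le _
    · simp only [fE, capN]
      split_ifs with h1 h2
      · exact le_rfl
      · exact absurd ⟨h1.1, lt_of_lt_of_le h1.2 (hB b)⟩ h2
      · exact Nat.zero_le _
      · exact Nat.zero_le _
    · have := hB b
      simp only [fE, capN]; split_ifs <;> omega
  · rintro (_|_|_|⟨a,i⟩|a|b|⟨b,i⟩) hs ht
    · exact absurd rfl hs
    · -- sp
      rw [sum_fnode (fun u => fE D E u FNode.sp), sum_fnode (fun v => fE D E FNode.sp v)]
      simp only [fE, Finset.sum_const_zero, add_zero, zero_add]
      rw [Finset.sum_congr rfl (fun a (_ : a ∈ univ) => sum_fin_ite01 (hAn a)), sum_cntA]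
    · exact absurd rfl ht
    · -- vAi a i
      rw [sum_fnode (fun u => fE D E u (FNode.vAi a i)),
        sum_fnode (fun v => fE D E (FNode.vAi a i) v)]
      simp [fE, ite_and, Finset.sum_ite_eq]
    · -- vA a
      rw [sum_fnode (fun u => fE D E u (FNode.vA a)),
        sum_fnode (fun v => fE D E (FNode.vA a) v)]
      have key : ∀ x : α, (∑ i : Fin D.card, if x = a ∧ i.val < cntA E x then 1 else 0)
          = if x = a then cntA E a else 0 := by
        intro x
        by_cases h : x = a
        · subst h; simpa using sum_fin_ite01 (hAn x)
        · simp [h]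
      simp only [fE, Finset.sum_const_zero, add_zero, zero_add]
      rw [Finset.sum_congr rfl (fun x (_ : x ∈ univ) => key x),
        Finset.sum_ite_eq' univ a (fun _ => cntA E a), if_pos (mem_univ a)]
      exact (cntA_sum E a).symm
    · -- uB b
      rw [sum_fnode (fun u => fE D E u (FNode.uB b)),
        sum_fnode (fun v => fE D E (FNode.uB b) v)]
      have key : ∀ x : β, (∑ i : Fin D.card, if b = x ∧ i.val < cntB E b then 1 else 0)
          = if b = x then cntB E b else 0 := by
        intro x
        by_cases h : b = x
        · subst h; simpa using sum_fin_ite01 (hBn b)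
        · simp [h]
      simp only [fE, Finset.sum_const_zero, add_zero, zero_add]
      rw [Finset.sum_congr rfl (fun x (_ : x ∈ univ) => key x),
        Finset.sum_ite_eq univ b (fun _ => cntB E b), if_pos (mem_univ b)]
      exact cntB_sum E b
    · -- uBi b i
      rw [sum_fnode (fun u => fE D E u (FNode.uBi b i)),
        sum_fnode (fun v => fE D E (FNode.uBi b i) v)]
      have key : ∀ x : β, (if x = b ∧ i.val < cntB E x then 1 else 0)
          = if x = b then (if i.val < cntB E b then 1 else 0) else 0 := by
        intro x
        by_cases h : x = b
        · subst h; simp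
        · simp [h]
      simp only [fE, Finset.sum_const_zero, add_zero, zero_add]
      rw [Finset.sum_congr rfl (fun x (_ : x ∈ univ) => key x),
        Finset.sum_ite_eq' univ b (fun _ => if i.val < cntB E b then 1 else 0),
        if_pos (mem_univ b)]

lemma flowValue_fE [Fintype α] [Fintype β] (D E : Finset (α × β)) :
    flowValue (fE D E) = E.card := by
  unfold flowValue
  rw [sum_fnode (fun v => fE D E FNode.s v)]
  simp [fE]

/-- The middle-layer cost. -/
lemma sum_middle [Fintype α] [Fintype β] (D E : Finset (α × β)) (hE : E ⊆ D)
    (w : α × β → ℚ) :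
    (∑ a, ∑ b, (if (a, b) ∈ E then (1:ℚ) else 0)
        * (if (a, b) ∈ D then -w (a, b) else 0))
      = ∑ f ∈ E, -(w f) := by
  classical
  have h : ∀ (a : α) (b : β), (if (a, b) ∈ E then (1:ℚ) else 0)
      * (if (a, b) ∈ D then -w (a, b) else 0)
      = if (a, b) ∈ E then -(w (a, b)) else 0 := by
    intro a b; by_cases h : (a, b) ∈ E
    · simp [h, hE h]
    · simp [h]
  simp only [h]
  rw [← Fintype.sum_prod_type (f := fun p : α × β => if p ∈ E then -(w p) else 0),
    Finset.sum_ite_mem, univ_inter]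

/-- Cost of the canonical flow `f_E`. -/
lemma flowCost_fE [Fintype α] [Fintype β] (D E : Finset (α × β)) (hE : E ⊆ D)
    (w : α × β → ℚ) (w1 w2 : ℚ) :
    flowCost D w w1 w2 (fE D E)
      = (∑ f ∈ E, -(w f))
        + (∑ a, ∑ i ∈ range (cntA E a), (i : ℚ)) * w1
        + (∑ b, ∑ i ∈ range (cntB E b), (i : ℚ)) * w2 := by
  have hAn : ∀ a, cntA E a ≤ D.card :=
    fun a => le_trans (card_filter_le _ _) (card_le_card hE)
  have hBn : ∀ b, cntB E b ≤ D.card :=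
    fun b => le_trans (card_filter_le _ _) (card_le_card hE)
  rw [flowCost_eq]
  have t1 : ∀ a : α, (∑ i : Fin D.card,
      ((fE D E (.vAi a i) (.vA a) : ℕ) : ℚ) * ((i.val : ℚ) * w1))
      = (∑ i ∈ range (cntA E a), (i : ℚ)) * w1 := by
    intro a
    rw [← sum_fin_ite_cast (hAn a) w1]
    refine Finset.sum_congr rfl fun i _ => ?_
    simp [fE]
  have t3 : ∀ b : β, (∑ i : Fin D.card,
      ((fE D E (.uB b) (.uBi b i) : ℕ) : ℚ) * ((i.val : ℚ) * w2))
      = (∑ i ∈ range (cntB E b), (i : ℚ)) * w2 := by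
    intro b
    rw [← sum_fin_ite_cast (hBn b) w2]
    refine Finset.sum_congr rfl fun i _ => ?_
    simp [fE]
  have t2 : (∑ a, ∑ b, ((fE D E (.vA a) (.uB b) : ℕ) : ℚ)
        * (if (a, b) ∈ D then -w (a, b) else 0)) = ∑ f ∈ E, -(w f) := by
    have h : ∀ (a : α) (b : β), ((fE D E (.vA a) (.uB b) : ℕ) : ℚ)
        = if (a, b) ∈ E then (1:ℚ) else 0 := by
      intro a b; simp [fE]
    simp only [h]
    exact sum_middle D E hE w
  rw [Finset.sum_congr rfl (fun a (_ : a ∈ univ) => t1 a),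
    Finset.sum_congr rfl (fun b (_ : b ∈ univ) => t3 b), t2,
    ← Finset.sum_mul, ← Finset.sum_mul]
  ring

end AuxFlow

/-- Lemma 2 of the paper: every minimum-cost integral maximum flow `g` of `N_k`
satisfies `cost(g) = w_D(D[g])`. -/
theorem min_cost_max_flow_cost_eq [Fintype α] [Fintype β]
    (D : Finset (α × β)) (k : ℕ) (w : α × β → ℚ) (w1 w2 : ℚ)
    (hw : ∀ f ∈ D, 0 ≤ w f) (h1 : 0 ≤ w1) (h2 : 0 ≤ w2)
    (g : FNode α β D.card → FNode α β D.card → ℕ)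
    (hg : IsFlow D k g)
    (hmax : ∀ g', IsFlow D k g' → flowValue g' ≤ flowValue g)
    (hmin : ∀ g', IsFlow D k g' → flowValue g' = flowValue g →
      flowCost D w w1 w2 g ≤ flowCost D w w1 w2 g') :
    flowCost D w w1 w2 g = wDAB w w1 w2 (Dof D g) := by
  classical
  obtain ⟨hcap, hcons⟩ := hg
  set E := Dof D g with hEdef
  have hED : E ⊆ D := filter_subset _ _
  have hAn : ∀ a, cntA E a ≤ D.card :=
    fun a => le_trans (card_filter_le _ _) (card_le_card hED)
  have hBn : ∀ b, cntB E b ≤ D.card :=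
    fun b => le_trans (card_filter_le _ _) (card_le_card hED)
  have z : ∀ u v, capN D k u v = 0 → g u v = 0 :=
    fun u v h => Nat.le_zero.mp (h ▸ hcap u v)
  -- the middle edges of `g` are exactly the indicator of `E`
  have hmid : ∀ a b, g (FNode.vA a) (FNode.uB b) = if (a, b) ∈ E then 1 else 0 := by
    intro a b
    by_cases hD : (a, b) ∈ D
    · have hle : g (FNode.vA a) (FNode.uB b) ≤ 1 := by
        have := hcap (FNode.vA a) (FNode.uB b)
        simpa [capN, hD] using this
      by_cases h1 : g (FNode.vA a) (FNode.uB b) = 1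
      · have : (a, b) ∈ E := mem_filter.mpr ⟨hD, h1⟩
        simp [this, h1]
      · have h0 : g (FNode.vA a) (FNode.uB b) = 0 := by omega
        have : (a, b) ∉ E := fun hmem => h1 (mem_filter.mp hmem).2
        simp [this, h0]
    · have h0 : g (FNode.vA a) (FNode.uB b) = 0 := z _ _ (by simp [capN, hD])
      have : (a, b) ∉ E := fun hmem => hD (mem_filter.mp hmem).1
      simp [this, h0]
  -- conservation at `vAi a i`
  have hvAi : ∀ a i, g FNode.sp (FNode.vAi a i) = g (FNode.vAi a i) (FNode.vA a) := by
    intro a i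
    have h := hcons (FNode.vAi a i) (fun h => nomatch h) (fun h => nomatch h)
    rw [sum_fnode (fun u => g u (FNode.vAi a i)),
      sum_fnode (fun v => g (FNode.vAi a i) v)] at h
    have hr : (∑ a', g (FNode.vAi a i) (FNode.vA a')) = g (FNode.vAi a i) (FNode.vA a) :=
      Finset.sum_eq_single_of_mem a (mem_univ a)
        (fun a' _ hne => z _ _ (by simp [capN, Ne.symm hne]))
    simp only [
      show g FNode.s (FNode.vAi a i) = 0 from z _ _ rfl,
      show g FNode.t (FNode.vAi a i) = 0 from z _ _ rfl,
      show ∀ (a' : α) (j : Fin D.card), g (FNode.vAi a' j) (FNode.vAi a i) = 0 from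
        fun _ _ => z _ _ rfl,
      show ∀ a' : α, g (FNode.vA a') (FNode.vAi a i) = 0 from fun _ => z _ _ rfl,
      show ∀ b : β, g (FNode.uB b) (FNode.vAi a i) = 0 from fun _ => z _ _ rfl,
      show ∀ (b : β) (j : Fin D.card), g (FNode.uBi b j) (FNode.vAi a i) = 0 from
        fun _ _ => z _ _ rfl,
      show g (FNode.vAi a i) FNode.s = 0 from z _ _ rfl,
      show g (FNode.vAi a i) FNode.sp = 0 from z _ _ rfl,
      show g (FNode.vAi a i) FNode.t = 0 from z _ _ rfl,
      show ∀ (a' : α) (j : Fin D.card), g (FNode.vAi a i) (FNode.vAi a' j) = 0 from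
        fun _ _ => z _ _ rfl,
      show ∀ b : β, g (FNode.vAi a i) (FNode.uB b) = 0 from fun _ => z _ _ rfl,
      show ∀ (b : β) (j : Fin D.card), g (FNode.vAi a i) (FNode.uBi b j) = 0 from
        fun _ _ => z _ _ rfl,
      hr, Finset.sum_const_zero, add_zero, zero_add] at h
    exact h
  -- conservation at `vA a`
  have hvA : ∀ a, (∑ i, g (FNode.vAi a i) (FNode.vA a)) = cntA E a := by
    intro a
    have h := hcons (FNode.vA a) (fun h => nomatch h) (fun h => nomatch h)
    rw [sum_fnode (fun u => g u (FNode.vA a)),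
      sum_fnode (fun v => g (FNode.vA a) v)] at h
    have hl : (∑ a', ∑ i, g (FNode.vAi a' i) (FNode.vA a))
        = ∑ i, g (FNode.vAi a i) (FNode.vA a) :=
      Finset.sum_eq_single_of_mem a (mem_univ a)
        (fun a' _ hne => Finset.sum_eq_zero fun i _ => z _ _ (by simp [capN, hne]))
    simp only [
      show g FNode.s (FNode.vA a) = 0 from z _ _ rfl,
      show g FNode.sp (FNode.vA a) = 0 from z _ _ rfl,
      show g FNode.t (FNode.vA a) = 0 from z _ _ rfl,
      show ∀ a' : α, g (FNode.vA a') (FNode.vA a) = 0 from fun _ => z _ _ rfl,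
      show ∀ b : β, g (FNode.uB b) (FNode.vA a) = 0 from fun _ => z _ _ rfl,
      show ∀ (b : β) (j : Fin D.card), g (FNode.uBi b j) (FNode.vA a) = 0 from
        fun _ _ => z _ _ rfl,
      show g (FNode.vA a) FNode.s = 0 from z _ _ rfl,
      show g (FNode.vA a) FNode.sp = 0 from z _ _ rfl,
      show g (FNode.vA a) FNode.t = 0 from z _ _ rfl,
      show ∀ (a' : α) (j : Fin D.card), g (FNode.vA a) (FNode.vAi a' j) = 0 from
        fun _ _ => z _ _ rfl,
      show ∀ a' : α, g (FNode.vA a) (FNode.vA a') = 0 from fun _ => z _ _ rfl,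
      show ∀ (b : β) (j : Fin D.card), g (FNode.vA a) (FNode.uBi b j) = 0 from
        fun _ _ => z _ _ rfl,
      hl, Finset.sum_const_zero, add_zero, zero_add] at h
    rw [h]
    simp only [hmid]
    exact cntA_sum E a
  -- conservation at `uB b`
  have huB : ∀ b, (∑ i, g (FNode.uB b) (FNode.uBi b i)) = cntB E b := by
    intro b
    have h := hcons (FNode.uB b) (fun h => nomatch h) (fun h => nomatch h)
    rw [sum_fnode (fun u => g u (FNode.uB b)),
      sum_fnode (fun v => g (FNode.uB b) v)] at h
    have hr : (∑ b', ∑ i, g (FNode.uB b) (FNode.uBi b' i))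
        = ∑ i, g (FNode.uB b) (FNode.uBi b i) :=
      Finset.sum_eq_single_of_mem b (mem_univ b)
        (fun b' _ hne => Finset.sum_eq_zero fun i _ =>
          z _ _ (by simp [capN, Ne.symm hne]))
    simp only [
      show g FNode.s (FNode.uB b) = 0 from z _ _ rfl,
      show g FNode.sp (FNode.uB b) = 0 from z _ _ rfl,
      show g FNode.t (FNode.uB b) = 0 from z _ _ rfl,
      show ∀ (a : α) (j : Fin D.card), g (FNode.vAi a j) (FNode.uB b) = 0 from
        fun _ _ => z _ _ rfl,
      show ∀ b' : β, g (FNode.uB b') (FNode.uB b) = 0 from fun _ => z _ _ rfl,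
      show ∀ (b' : β) (j : Fin D.card), g (FNode.uBi b' j) (FNode.uB b) = 0 from
        fun _ _ => z _ _ rfl,
      show g (FNode.uB b) FNode.s = 0 from z _ _ rfl,
      show g (FNode.uB b) FNode.sp = 0 from z _ _ rfl,
      show g (FNode.uB b) FNode.t = 0 from z _ _ rfl,
      show ∀ (a : α) (j : Fin D.card), g (FNode.uB b) (FNode.vAi a j) = 0 from
        fun _ _ => z _ _ rfl,
      show ∀ a : α, g (FNode.uB b) (FNode.vA a) = 0 from fun _ => z _ _ rfl,
      show ∀ b' : β, g (FNode.uB b) (FNode.uB b') = 0 from fun _ => z _ _ rfl,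
      hr, Finset.sum_const_zero, add_zero, zero_add] at h
    rw [← h]
    simp only [hmid]
    exact cntB_sum E b
  -- value of `g`
  have hval : flowValue g = g FNode.s FNode.sp := by
    unfold flowValue
    rw [sum_fnode (fun v => g FNode.s v)]
    simp only [
      show g FNode.s FNode.s = 0 from z _ _ rfl,
      show g FNode.s FNode.t = 0 from z _ _ rfl,
      show ∀ (a : α) (j : Fin D.card), g FNode.s (FNode.vAi a j) = 0 from
        fun _ _ => z _ _ rfl,
      show ∀ a : α, g FNode.s (FNode.vA a) = 0 from fun _ => z _ _ rfl,
      show ∀ b : β, g FNode.s (FNode.uB b) = 0 from fun _ => z _ _ rfl,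
      show ∀ (b : β) (j : Fin D.card), g FNode.s (FNode.uBi b j) = 0 from
        fun _ _ => z _ _ rfl,
      Finset.sum_const_zero, add_zero, zero_add]
  -- conservation at `sp`
  have hEcard : g FNode.s FNode.sp = E.card := by
    have h := hcons FNode.sp (fun h => nomatch h) (fun h => nomatch h)
    rw [sum_fnode (fun u => g u FNode.sp), sum_fnode (fun v => g FNode.sp v)] at h
    simp only [
      show g FNode.sp FNode.sp = 0 from z _ _ rfl,
      show g FNode.t FNode.sp = 0 from z _ _ rfl,
      show ∀ (a : α) (j : Fin D.card), g (FNode.vAi a j) FNode.sp = 0 from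
        fun _ _ => z _ _ rfl,
      show ∀ a : α, g (FNode.vA a) FNode.sp = 0 from fun _ => z _ _ rfl,
      show ∀ b : β, g (FNode.uB b) FNode.sp = 0 from fun _ => z _ _ rfl,
      show ∀ (b : β) (j : Fin D.card), g (FNode.uBi b j) FNode.sp = 0 from
        fun _ _ => z _ _ rfl,
      show g FNode.sp FNode.s = 0 from z _ _ rfl,
      show g FNode.sp FNode.t = 0 from z _ _ rfl,
      show ∀ a : α, g FNode.sp (FNode.vA a) = 0 from fun _ => z _ _ rfl,
      show ∀ b : β, g FNode.sp (FNode.uB b) = 0 from fun _ => z _ _ rfl,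
      show ∀ (b : β) (j : Fin D.card), g FNode.sp (FNode.uBi b j) = 0 from
        fun _ _ => z _ _ rfl,
      Finset.sum_const_zero, add_zero, zero_add] at h
    rw [h]
    simp only [hvAi]
    rw [Finset.sum_congr rfl (fun a (_ : a ∈ univ) => hvA a), sum_cntA]
  -- `f_E` is a maximum flow of the same value
  have hk' : E.card ≤ k := by
    rw [← hEcard]; exact hcap FNode.s FNode.sp
  have hflowfE := isFlow_fE D E k hED hk'
  have hvalfE : flowValue (fE D E) = flowValue g := by
    rw [flowValue_fE, hval, hEcard]
  have hle := hmin (fE D E) hflowfE hvalfE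
  rw [flowCost_fE D E hED w w1 w2] at hle
  -- `wDAB` in explicit form
  have hwd : wDAB w w1 w2 E
      = (∑ f ∈ E, -(w f))
        + (∑ a, ∑ i ∈ range (cntA E a), (i : ℚ)) * w1
        + (∑ b, ∑ i ∈ range (cntB E b), (i : ℚ)) * w2 := by
    unfold wDAB
    rw [numVio_fst, numVio_snd]
    have hc : ∀ m : ℕ, ((m.choose 2 : ℕ) : ℚ) = ∑ i ∈ range m, (i : ℚ) := by
      intro m
      rw [← sum_range_id_choose m]
      push_cast
      rfl
    push_cast
    simp only [hc]
    ring
  -- lower bound for the cost of `g`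
  have hge : wDAB w w1 w2 E ≤ flowCost D w w1 w2 g := by
    rw [hwd, flowCost_eq]
    have hT2 : (∑ a, ∑ b, (g (FNode.vA a) (FNode.uB b) : ℚ)
          * (if (a, b) ∈ D then -w (a, b) else 0)) = ∑ f ∈ E, -(w f) := by
      rw [← sum_middle D E hED w]
      refine Finset.sum_congr rfl fun a _ => Finset.sum_congr rfl fun b _ => ?_
      rw [hmid a b]
      split_ifs <;> simp
    have hT1 : ∀ a : α, (∑ i ∈ range (cntA E a), (i : ℚ)) * w1
        ≤ ∑ i, (g (FNode.vAi a i) (FNode.vA a) : ℚ) * ((i.val : ℚ) * w1) := by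
      intro a
      have hx : ∀ i : Fin D.card, g (FNode.vAi a i) (FNode.vA a) ≤ 1 := by
        intro i
        refine le_trans (hcap _ _) ?_
        simp only [capN]; split <;> omega
      have hnat : ∑ i ∈ range (cntA E a), i
          ≤ ∑ i : Fin D.card, g (FNode.vAi a i) (FNode.vA a) * i.val := by
        have := lower_bound_sum (fun i => g (FNode.vAi a i) (FNode.vA a)) hx
        rwa [hvA a] at this
      have hcast : ((∑ i ∈ range (cntA E a), i : ℕ) : ℚ)
          ≤ ((∑ i : Fin D.card, g (FNode.vAi a i) (FNode.vA a) * i.val : ℕ) : ℚ) := by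
        exact_mod_cast hnat
      push_cast at hcast
      calc (∑ i ∈ range (cntA E a), (i : ℚ)) * w1
          ≤ (∑ i : Fin D.card, (g (FNode.vAi a i) (FNode.vA a) : ℚ) * (i.val : ℚ)) * w1 :=
            mul_le_mul_of_nonneg_right hcast h1
        _ = ∑ i, (g (FNode.vAi a i) (FNode.vA a) : ℚ) * ((i.val : ℚ) * w1) := by
            rw [Finset.sum_mul]
            exact Finset.sum_congr rfl fun i _ => by ring
    have hT3 : ∀ b : β, (∑ i ∈ range (cntB E b), (i : ℚ)) * w2
        ≤ ∑ i, (g (FNode.uB b) (FNode.uBi b i) : ℚ) * ((i.val : ℚ) * w2) := by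
      intro b
      have hx : ∀ i : Fin D.card, g (FNode.uB b) (FNode.uBi b i) ≤ 1 := by
        intro i
        refine le_trans (hcap _ _) ?_
        simp only [capN]; split <;> omega
      have hnat : ∑ i ∈ range (cntB E b), i
          ≤ ∑ i : Fin D.card, g (FNode.uB b) (FNode.uBi b i) * i.val := by
        have := lower_bound_sum (fun i => g (FNode.uB b) (FNode.uBi b i)) hx
        rwa [huB b] at this
      have hcast : ((∑ i ∈ range (cntB E b), i : ℕ) : ℚ)
          ≤ ((∑ i : Fin D.card, g (FNode.uB b) (FNode.uBi b i) * i.val : ℕ) : ℚ) := by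
        exact_mod_cast hnat
      push_cast at hcast
      calc (∑ i ∈ range (cntB E b), (i : ℚ)) * w2
          ≤ (∑ i : Fin D.card, (g (FNode.uB b) (FNode.uBi b i) : ℚ) * (i.val : ℚ)) * w2 :=
            mul_le_mul_of_nonneg_right hcast h2
        _ = ∑ i, (g (FNode.uB b) (FNode.uBi b i) : ℚ) * ((i.val : ℚ) * w2) := by
            rw [Finset.sum_mul]
            exact Finset.sum_congr rfl fun i _ => by ring
    have hA := Finset.sum_le_sum (fun a (_ : a ∈ univ) => hT1 a)
    have hB := Finset.sum_le_sum (fun b (_ : b ∈ univ) => hT3 b)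
    rw [← Finset.sum_mul] at hA hB
    linarith
  rw [← hwd] at hle
  exact le_antisymm hle hge
end

section
/- Let D be a database over R(A,B) and Δ = {A→B, B→A} with w_{A→B}, w_{B→A} both strictly greater than 2·max_{f∈D} w_f. Then every optimal subset E of D satisfies Δ (has no violations), i.e., E is a matching in the bipartite graph whose left vertices are A-values and right vertices are B-values, and E maximizes Σ_{f∈E} w_f among matchings. -/
attribute [local instance] Classical.propDecidable

open Finset

lemma numVio_mono {F : Type*} [DecidableEq F] (viol : F → F → Prop)
    {E E' : Finset F} (h : E' ⊆ E) : numVio viol E' ≤ numVio viol E := by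
  apply Finset.card_le_card
  intro p hp
  simp only [mem_filter, mem_powersetCard] at *
  exact ⟨⟨hp.1.1.trans h, hp.1.2⟩, hp.2⟩

lemma numVio_eq_zero {F : Type*} [DecidableEq F] (viol : F → F → Prop) {E : Finset F}
    (h : ∀ f ∈ E, ∀ g ∈ E, f ≠ g → ¬ viol f g) : numVio viol E = 0 := by
  unfold numVio
  simp only [Finset.card_eq_zero, Finset.filter_eq_empty_iff]
  intro p hp
  simp only [mem_powersetCard] at hp
  obtain ⟨f, g, hfg, rfl⟩ := Finset.card_eq_two.mp hp.2
  intro hc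
  exact h f (hp.1 (by simp)) g (hp.1 (by simp)) hfg (hc f (by simp) g (by simp) hfg)

lemma numVio_erase {F : Type*} [DecidableEq F] (viol : F → F → Prop) {E : Finset F}
    {f g : F} (hf : f ∈ E) (hg : g ∈ E) (hfg : f ≠ g)
    (hv : ∀ a ∈ ({f, g} : Finset F), ∀ b ∈ ({f, g} : Finset F), a ≠ b → viol a b) :
    numVio viol (E.erase f) + 1 ≤ numVio viol E := by
  have hm : ∀ x ∈ ({f, g} : Finset F), x ∈ E := by
    intro x hx
    rcases Finset.mem_insert.mp hx with rfl | hx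
    · exact hf
    · rw [Finset.mem_singleton] at hx; subst hx; exact hg
  apply Nat.succ_le_of_lt
  unfold numVio
  apply Finset.card_lt_card
  constructor
  · intro p hp
    simp only [mem_filter, mem_powersetCard] at hp ⊢
    exact ⟨⟨hp.1.1.trans (Finset.erase_subset _ _), hp.1.2⟩, hp.2⟩
  · intro hsup
    have key := hsup (by
      simp only [mem_filter, mem_powersetCard]
      exact ⟨⟨hm, Finset.card_pair hfg⟩, hv⟩)
    simp only [mem_filter, mem_powersetCard] at key
    exact Finset.notMem_erase f E (key.1.1 (Finset.mem_insert_self f _))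

lemma sdiff_erase_insert {F : Type*} [DecidableEq F] {D E : Finset F} {f : F}
    (hf : f ∈ E) (hE : E ⊆ D) : D \ E.erase f = insert f (D \ E) := by
  have hfD : f ∈ D := hE hf
  ext x
  simp only [Finset.mem_sdiff, Finset.mem_erase, Finset.mem_insert, not_and]
  constructor
  · rintro ⟨hxD, hx⟩
    by_cases hxf : x = f
    · exact Or.inl hxf
    · exact Or.inr ⟨hxD, fun hxE => (hx hxf) hxE⟩
  · rintro (rfl | ⟨hxD, hxE⟩)
    · exact ⟨hfD, fun h => absurd rfl h⟩
    · exact ⟨hxD, fun _ h => hxE h⟩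

variable {α β : Type*} [DecidableEq α] [DecidableEq β]

/-- Cost of `E ⊆ D` for `Δ = {A→B, B→A}` with FD weights `w1, w2`. -/
noncomputable def costMatch (D : Finset (α × β)) (w : α × β → ℚ) (w1 w2 : ℚ)
    (E : Finset (α × β)) : ℚ :=
  (∑ f ∈ D \ E, w f) +
    w1 * (numVio (fun f g => f.1 = g.1 ∧ f.2 ≠ g.2) E : ℚ) +
    w2 * (numVio (fun f g => f.2 = g.2 ∧ f.1 ≠ g.1) E : ℚ)

lemma cost_drop1 (D : Finset (α × β)) (w : α × β → ℚ) (w1 w2 : ℚ)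
    (hw : ∀ f ∈ D, 0 ≤ w f) (hw1 : ∀ f ∈ D, 2 * w f < w1) (hw2 : ∀ f ∈ D, 2 * w f < w2)
    {E : Finset (α × β)} (hE : E ⊆ D) {f g : α × β} (hf : f ∈ E) (hg : g ∈ E)
    (hne : f ≠ g) (hv : f.1 = g.1 ∧ f.2 ≠ g.2) :
    costMatch D w w1 w2 (E.erase f) < costMatch D w w1 w2 E := by
  set v1 : α × β → α × β → Prop := fun f g => f.1 = g.1 ∧ f.2 ≠ g.2 with hv1
  set v2 : α × β → α × β → Prop := fun f g => f.2 = g.2 ∧ f.1 ≠ g.1 with hv2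
  have hfD : f ∈ D := hE hf
  have hwf : 0 ≤ w f := hw f hfD
  have hw1pos : (0:ℚ) < w1 := lt_of_le_of_lt (by linarith) (hw1 f hfD)
  have hw2pos : (0:ℚ) < w2 := lt_of_le_of_lt (by linarith) (hw2 f hfD)
  have hvsym : ∀ a ∈ ({f, g} : Finset (α × β)), ∀ b ∈ ({f, g} : Finset (α × β)),
      a ≠ b → v1 a b := by
    intro a ha b hb hab
    simp only [Finset.mem_insert, Finset.mem_singleton] at ha hb
    rcases ha with rfl | rfl <;> rcases hb with rfl | rfl
    · exact absurd rfl hab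
    · exact hv
    · exact ⟨hv.1.symm, fun h => hv.2 h.symm⟩
    · exact absurd rfl hab
  have h1 : numVio v1 (E.erase f) + 1 ≤ numVio v1 E := numVio_erase v1 hf hg hne hvsym
  have h2 : numVio v2 (E.erase f) ≤ numVio v2 E := numVio_mono v2 (Finset.erase_subset _ _)
  have hsum : ∑ x ∈ D \ E.erase f, w x = w f + ∑ x ∈ D \ E, w x := by
    rw [sdiff_erase_insert hf hE, Finset.sum_insert (by simp [hf])]
  have h1q : (numVio v1 (E.erase f) : ℚ) ≤ (numVio v1 E : ℚ) - 1 := by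
    have hc : (numVio v1 (E.erase f) : ℚ) + 1 ≤ (numVio v1 E : ℚ) := by exact_mod_cast h1
    linarith
  have h2q : (numVio v2 (E.erase f) : ℚ) ≤ (numVio v2 E : ℚ) := by exact_mod_cast h2
  have m1 : w1 * (numVio v1 (E.erase f) : ℚ) ≤ w1 * ((numVio v1 E : ℚ) - 1) :=
    mul_le_mul_of_nonneg_left h1q hw1pos.le
  have m2 : w2 * (numVio v2 (E.erase f) : ℚ) ≤ w2 * (numVio v2 E : ℚ) :=
    mul_le_mul_of_nonneg_left h2q hw2pos.le
  have hwfw1 : w f < w1 := lt_of_le_of_lt (by linarith) (hw1 f hfD)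
  unfold costMatch
  rw [← hv1, ← hv2, hsum]
  nlinarith [m1, m2]

lemma cost_drop2 (D : Finset (α × β)) (w : α × β → ℚ) (w1 w2 : ℚ)
    (hw : ∀ f ∈ D, 0 ≤ w f) (hw1 : ∀ f ∈ D, 2 * w f < w1) (hw2 : ∀ f ∈ D, 2 * w f < w2)
    {E : Finset (α × β)} (hE : E ⊆ D) {f g : α × β} (hf : f ∈ E) (hg : g ∈ E)
    (hne : f ≠ g) (hv : f.2 = g.2 ∧ f.1 ≠ g.1) :
    costMatch D w w1 w2 (E.erase f) < costMatch D w w1 w2 E := by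
  set v1 : α × β → α × β → Prop := fun f g => f.1 = g.1 ∧ f.2 ≠ g.2 with hv1
  set v2 : α × β → α × β → Prop := fun f g => f.2 = g.2 ∧ f.1 ≠ g.1 with hv2
  have hfD : f ∈ D := hE hf
  have hwf : 0 ≤ w f := hw f hfD
  have hw1pos : (0:ℚ) < w1 := lt_of_le_of_lt (by linarith) (hw1 f hfD)
  have hw2pos : (0:ℚ) < w2 := lt_of_le_of_lt (by linarith) (hw2 f hfD)
  have hvsym : ∀ a ∈ ({f, g} : Finset (α × β)), ∀ b ∈ ({f, g} : Finset (α × β)),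
      a ≠ b → v2 a b := by
    intro a ha b hb hab
    simp only [Finset.mem_insert, Finset.mem_singleton] at ha hb
    rcases ha with rfl | rfl <;> rcases hb with rfl | rfl
    · exact absurd rfl hab
    · exact hv
    · exact ⟨hv.1.symm, fun h => hv.2 h.symm⟩
    · exact absurd rfl hab
  have h2 : numVio v2 (E.erase f) + 1 ≤ numVio v2 E := numVio_erase v2 hf hg hne hvsym
  have h1 : numVio v1 (E.erase f) ≤ numVio v1 E := numVio_mono v1 (Finset.erase_subset _ _)
  have hsum : ∑ x ∈ D \ E.erase f, w x = w f + ∑ x ∈ D \ E, w x := by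
    rw [sdiff_erase_insert hf hE, Finset.sum_insert (by simp [hf])]
  have h2q : (numVio v2 (E.erase f) : ℚ) ≤ (numVio v2 E : ℚ) - 1 := by
    have hc : (numVio v2 (E.erase f) : ℚ) + 1 ≤ (numVio v2 E : ℚ) := by exact_mod_cast h2
    linarith
  have h1q : (numVio v1 (E.erase f) : ℚ) ≤ (numVio v1 E : ℚ) := by exact_mod_cast h1
  have m2 : w2 * (numVio v2 (E.erase f) : ℚ) ≤ w2 * ((numVio v2 E : ℚ) - 1) :=
    mul_le_mul_of_nonneg_left h2q hw2pos.le
  have m1 : w1 * (numVio v1 (E.erase f) : ℚ) ≤ w1 * (numVio v1 E : ℚ) :=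
    mul_le_mul_of_nonneg_left h1q hw1pos.le
  have hwfw2 : w f < w2 := lt_of_le_of_lt (by linarith) (hw2 f hfD)
  unfold costMatch
  rw [← hv1, ← hv2, hsum]
  nlinarith [m1, m2]

/-- When both FD weights exceed twice every fact weight, every optimal subset of
`D` w.r.t. `Δ = {A→B, B→A}` has no violations — i.e. it is a partial matching of
the bipartite graph of `A`- and `B`-values — and it maximizes the total retained
weight among all matchings contained in `D`. -/
theorem heavy_fd_weights_give_max_weight_matching
    (D : Finset (α × β)) (w : α × β → ℚ) (w1 w2 : ℚ)
    (hw : ∀ f ∈ D, 0 ≤ w f)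
    (hw1 : ∀ f ∈ D, 2 * w f < w1) (hw2 : ∀ f ∈ D, 2 * w f < w2)
    (E : Finset (α × β)) (hE : E ⊆ D)
    (hopt : ∀ E' ⊆ D, costMatch D w w1 w2 E ≤ costMatch D w w1 w2 E') :
    (∀ f ∈ E, ∀ g ∈ E, f.1 = g.1 → f = g) ∧
    (∀ f ∈ E, ∀ g ∈ E, f.2 = g.2 → f = g) ∧
    (∀ E' ⊆ D, (∀ f ∈ E', ∀ g ∈ E', f.1 = g.1 → f = g) →
      (∀ f ∈ E', ∀ g ∈ E', f.2 = g.2 → f = g) →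
      (∑ f ∈ E', w f) ≤ ∑ f ∈ E, w f) := by
  have key1 : ∀ f ∈ E, ∀ g ∈ E, f.1 = g.1 → f = g := by
    intro f hf g hg h1
    by_contra hne
    have h2 : f.2 ≠ g.2 := fun h => hne (Prod.ext h1 h)
    have hlt := cost_drop1 D w w1 w2 hw hw1 hw2 hE hf hg hne ⟨h1, h2⟩
    have hle := hopt (E.erase f) ((Finset.erase_subset _ _).trans hE)
    linarith
  have key2 : ∀ f ∈ E, ∀ g ∈ E, f.2 = g.2 → f = g := by
    intro f hf g hg h2
    by_contra hne
    have h1 : f.1 ≠ g.1 := fun h => hne (Prod.ext h h2)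
    have hlt := cost_drop2 D w w1 w2 hw hw1 hw2 hE hf hg hne ⟨h2, h1⟩
    have hle := hopt (E.erase f) ((Finset.erase_subset _ _).trans hE)
    linarith
  refine ⟨key1, key2, ?_⟩
  intro E' hE' hm1 hm2
  have hcostE : costMatch D w w1 w2 E = ∑ f ∈ D \ E, w f := by
    unfold costMatch
    rw [numVio_eq_zero _ (fun f hf g hg hne h => hne (key1 f hf g hg h.1)),
        numVio_eq_zero _ (fun f hf g hg hne h => hne (key2 f hf g hg h.1))]
    push_cast; ring
  have hcostE' : costMatch D w w1 w2 E' = ∑ f ∈ D \ E', w f := by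
    unfold costMatch
    rw [numVio_eq_zero _ (fun f hf g hg hne h => hne (hm1 f hf g hg h.1)),
        numVio_eq_zero _ (fun f hf g hg hne h => hne (hm2 f hf g hg h.1))]
    push_cast; ring
  have := hopt E' hE'
  rw [hcostE, hcostE'] at this
  have hsplitE : ∑ f ∈ D \ E, w f + ∑ f ∈ E, w f = ∑ f ∈ D, w f :=
    Finset.sum_sdiff hE
  have hsplitE' : ∑ f ∈ D \ E', w f + ∑ f ∈ E', w f = ∑ f ∈ D, w f :=
    Finset.sum_sdiff hE'
  linarith
end
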